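/- Let P be a centrally orthocomplete OML of projections in a synaptic algebra, with central cover γ, and let Q ⊆ P be a type-determining (TD) set. For 0 ≠ p ∈ P, the following are equivalent: (i) there exists 0 ≠ q ∈ Q with q ≤ p and γq = γp; (ii) for every central projection d, if pd ≠ 0 then Q contains a nonzero projection below pd. -/
import Mathlib


universe u

/-- A (partial axiomatization of a) synaptic algebra: a partially ordered real
vector subspace `A` of an associative unital algebra `R`, closed under squaring
and quadratic maps, in which the projections form an orthomodular lattice with
`p⊥ = 1 - p` and, for projections, `p ≤ q ↔ p * q = p ↔ q * p = p`. -/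
structure Synaptic (R : Type u) [Ring R] [PartialOrder R] where
  A : Set R
  one_mem : (1 : R) ∈ A
  add_mem : ∀ {a b : R}, a ∈ A → b ∈ A → a + b ∈ A
  neg_mem : ∀ {a : R}, a ∈ A → -a ∈ A
  sq_mem : ∀ {a : R}, a ∈ A → a * a ∈ A
  quad_mem : ∀ {a b : R}, a ∈ A → b ∈ A → a * b * a ∈ A
  add_le_add_right : ∀ {a b : R}, a ≤ b → ∀ c : R, a + c ≤ b + c
  sq_nonneg' : ∀ {a : R}, a ∈ A → 0 ≤ a * a
  quad_nonneg : ∀ {a b : R}, a ∈ A → b ∈ A → 0 ≤ b → 0 ≤ a * b * a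
  zero_lt_one' : (0 : R) < 1
  /-- for projections, the order is characterized multiplicatively -/
  proj_le_iff : ∀ {p q : R}, p ∈ A → p * p = p → q ∈ A → q * q = q →
    (p ≤ q ↔ p * q = p ∧ q * p = p)

namespace Synaptic

variable {R : Type u} [Ring R] [PartialOrder R] (S : Synaptic R)

/-- `p` is a projection of `A`. -/
def IsProj (p : R) : Prop := p ∈ S.A ∧ p * p = p

/-- `s` is a symmetry of `A`. -/
def IsSym (s : R) : Prop := s ∈ S.A ∧ s * s = 1

/-- `c` belongs to the center `C(A)` of `A`. -/
def Central (c : R) : Prop := c ∈ S.A ∧ ∀ a ∈ S.A, c * a = a * c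

/-- `c` is a central projection. -/
def IsCentralProj (c : R) : Prop := S.IsProj c ∧ S.Central c

/-- Equivalence of projections: `p ∼ q` iff there is a finite chain of
projections from `p` to `q` in which consecutive members are exchanged by a
symmetry of `A`. -/
def Equiv (p q : R) : Prop :=
  ∃ n : ℕ, ∃ e : ℕ → R, e 0 = p ∧ e n = q ∧ (∀ i ≤ n, S.IsProj (e i)) ∧
    ∀ i < n, ∃ s : R, S.IsSym s ∧ s * e i * s = e (i + 1)

/-- `p ⪯ q`: `p` is equivalent to a subprojection of `q`. -/
def SubEquiv (p q : R) : Prop := ∃ q₁ : R, S.IsProj q₁ ∧ q₁ ≤ q ∧ S.Equiv p q₁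

/-- `p` is the supremum, in the projection lattice `P`, of the set `F` of
projections. -/
def IsSupProj (F : Set R) (p : R) : Prop :=
  S.IsProj p ∧ (∀ q ∈ F, q ≤ p) ∧ ∀ r : R, S.IsProj r → (∀ q ∈ F, q ≤ r) → p ≤ r

/-- `p` is the infimum, in the projection lattice `P`, of the set `F` of
projections. -/
def IsInfProj (F : Set R) (p : R) : Prop :=
  S.IsProj p ∧ (∀ q ∈ F, p ≤ q) ∧ ∀ r : R, S.IsProj r → (∀ q ∈ F, r ≤ q) → r ≤ p

/-- `F` is a (pairwise) orthogonal set of projections. -/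
def OrthSet (F : Set R) : Prop :=
  (∀ p ∈ F, S.IsProj p) ∧ ∀ p ∈ F, ∀ q ∈ F, p ≠ q → p * q = 0

/-- `F` is a centrally orthogonal set of projections: its members are dominated
by a pairwise orthogonal family of central projections. -/
def CentOrthSet (F : Set R) : Prop :=
  (∀ p ∈ F, S.IsProj p) ∧ ∃ c : R → R,
    (∀ p ∈ F, S.IsCentralProj (c p) ∧ p ≤ c p) ∧
    ∀ p ∈ F, ∀ q ∈ F, p ≠ q → c p * c q = 0

/-- The projection lattice `P` is centrally orthocomplete. -/
def CentOrthocomplete : Prop :=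
  ∀ F : Set R, S.CentOrthSet F → ∃ p : R, S.IsSupProj F p

/-- The projection lattice `P` is complete. -/
def CompleteP : Prop :=
  ∀ F : Set R, (∀ p ∈ F, S.IsProj p) → ∃ p : R, S.IsSupProj F p

/-- `c` is the central cover `γ a` of `a`: the smallest central projection `c`
with `a * c = a`. -/
def IsCentralCover (a c : R) : Prop :=
  S.IsCentralProj c ∧ a * c = a ∧
    ∀ d : R, S.IsCentralProj d → a * d = a → c ≤ d

/-- `Q` is a type-determining (TD) set of projections: closed under suprema of
centrally orthogonal families and under meets (= products) with central
projections. -/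
def TD (Q : Set R) : Prop :=
  (∀ q ∈ Q, S.IsProj q) ∧
  (∀ F : Set R, F ⊆ Q → S.CentOrthSet F → ∀ p : R, S.IsSupProj F p → p ∈ Q) ∧
  (∀ q ∈ Q, ∀ c : R, S.IsCentralProj c → q * c ∈ Q)

/-- `Q` is projective: closed under equivalence of projections. -/
def Projective (Q : Set R) : Prop :=
  ∀ p q : R, q ∈ Q → S.Equiv p q → p ∈ Q

/-- `Q` is downward closed (`Q↓ ⊆ Q`). -/
def DownwardClosed (Q : Set R) : Prop :=
  ∀ q ∈ Q, ∀ p : R, S.IsProj p → p ≤ q → p ∈ Q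

/-- The projection `p` is modular: the interval OML `P[0,p]` satisfies the
modular law (stated relationally via suprema and infima in `P`, which agree
with those computed in `P[0,p]`). -/
def ModularProj (p : R) : Prop :=
  S.IsProj p ∧ ∀ a b c : R, S.IsProj a → S.IsProj b → S.IsProj c →
    a ≤ p → b ≤ p → c ≤ p → a ≤ c →
    ∀ i s j m : R, S.IsInfProj {b, c} i → S.IsSupProj {a, i} s →
      S.IsSupProj {a, b} j → S.IsInfProj {j, c} m → s = m

/-- `p` and `q` are perspective in the interval `P[0,r]`: they have a common
complement `x` there. -/
def PerspectiveIn (r p q : R) : Prop :=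
  ∃ x : R, S.IsProj x ∧ x ≤ r ∧ S.IsSupProj {p, x} r ∧ S.IsSupProj {q, x} r ∧
    S.IsInfProj {p, x} 0 ∧ S.IsInfProj {q, x} 0

end Synaptic

namespace Synaptic

variable {R : Type u} [Ring R] [PartialOrder R] (S : Synaptic R)

lemma zero_mem' : (0 : R) ∈ S.A := by
  have := S.add_mem S.one_mem (S.neg_mem S.one_mem); simpa using this

lemma isProj_zero' : S.IsProj 0 := ⟨S.zero_mem', by rw [mul_zero]⟩

lemma central_comm' {c a : R} (hc : S.Central c) (ha : a ∈ S.A) : c * a = a * c :=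
  hc.2 a ha

lemma proj_le' {p q : R} (hp : S.IsProj p) (hq : S.IsProj q)
    (h1 : p * q = p) (h2 : q * p = p) : p ≤ q :=
  (S.proj_le_iff hp.1 hp.2 hq.1 hq.2).2 ⟨h1, h2⟩

lemma proj_le_mul' {p q : R} (hp : S.IsProj p) (hq : S.IsProj q) (h : p ≤ q) :
    p * q = p ∧ q * p = p :=
  (S.proj_le_iff hp.1 hp.2 hq.1 hq.2).1 h

lemma proj_eq_zero' {q : R} (hq : S.IsProj q) (h : q ≤ 0) : q = 0 := by
  have h1 := (S.proj_le_mul' hq S.isProj_zero' h).1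
  rw [mul_zero] at h1
  exact h1.symm

lemma isProj_mul_central' {q c : R} (hq : S.IsProj q) (hc : S.IsCentralProj c) :
    S.IsProj (q * c) := by
  have hcomm : c * q = q * c := S.central_comm' hc.2 hq.1
  constructor
  · have h1 : q * c * q ∈ S.A := S.quad_mem hq.1 hc.1.1
    have h2 : q * c * q = q * c := by
      rw [mul_assoc, hcomm, ← mul_assoc, hq.2]
    rwa [h2] at h1
  · calc q * c * (q * c) = q * (c * (q * c)) := by rw [mul_assoc]
      _ = q * ((c * q) * c) := by rw [mul_assoc c q c]
      _ = q * ((q * c) * c) := by rw [hcomm]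
      _ = q * (q * (c * c)) := by rw [mul_assoc q c c]
      _ = q * q * (c * c) := by rw [← mul_assoc, ← mul_assoc]
      _ = q * c := by rw [hq.2, hc.1.2]

lemma isCentralProj_mul' {c d : R} (hc : S.IsCentralProj c) (hd : S.IsCentralProj d) :
    S.IsCentralProj (c * d) := by
  have hm : S.IsProj (c * d) := S.isProj_mul_central' hc.1 hd
  refine ⟨hm, hm.1, fun a ha => ?_⟩
  calc c * d * a = c * (d * a) := by rw [mul_assoc]
    _ = c * (a * d) := by rw [S.central_comm' hd.2 ha]
    _ = (c * a) * d := by rw [mul_assoc]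
    _ = (a * c) * d := by rw [S.central_comm' hc.2 ha]
    _ = a * (c * d) := by rw [mul_assoc]

lemma isCentralProj_one_sub' {c : R} (hc : S.IsCentralProj c) :
    S.IsCentralProj (1 - c) := by
  have hmem : (1 : R) - c ∈ S.A := by
    have := S.add_mem S.one_mem (S.neg_mem hc.1.1)
    simpa [sub_eq_add_neg] using this
  have hidem : ((1 : R) - c) * (1 - c) = 1 - c := by
    rw [sub_mul, one_mul, mul_sub, mul_one, hc.1.2, sub_self, sub_zero]
  refine ⟨⟨hmem, hidem⟩, hmem, fun a ha => ?_⟩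
  rw [sub_mul, mul_sub, one_mul, mul_one, S.central_comm' hc.2 ha]

end Synaptic

/-- Let `Q` be a TD set and `0 ≠ p` a projection. Then there exists
`0 ≠ q ∈ Q` with `q ≤ p` and `γq = γp` iff for every central projection `d`
with `pd ≠ 0`, `Q` contains a nonzero projection below `pd`. -/
theorem td_gamma_eq_iff {R : Type u} [Ring R] [PartialOrder R]
    (S : Synaptic R) (hco : S.CentOrthocomplete)
    (γ : R → R) (hγ : ∀ r : R, S.IsProj r → S.IsCentralCover r (γ r))
    (Q : Set R) (hQ : S.TD Q) (p : R) (hp : S.IsProj p) (hp0 : p ≠ 0) :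
    (∃ q ∈ Q, q ≠ 0 ∧ q ≤ p ∧ γ q = γ p) ↔
      (∀ d : R, S.IsCentralProj d → p * d ≠ 0 →
        ∃ q ∈ Q, q ≠ 0 ∧ q ≤ p * d) := by
  obtain ⟨hQproj, hQsup, hQmulc⟩ := hQ
  have hγp := hγ p hp
  constructor
  · rintro ⟨q, hqQ, hq0, hqle, hγeq⟩ d hd hpd
    have hq : S.IsProj q := hQproj q hqQ
    have hγq := hγ q hq
    refine ⟨q * d, hQmulc q hqQ d hd, ?_, ?_⟩
    · intro hqd0
      have h1 : q * (1 - d) = q := by rw [mul_sub, mul_one, hqd0, sub_zero]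
      have hle : γ q ≤ 1 - d := hγq.2.2 (1 - d) (S.isCentralProj_one_sub' hd) h1
      have h2 : γ p * (1 - d) = γ p := by
        have := (S.proj_le_mul' hγq.1.1 (S.isCentralProj_one_sub' hd).1 hle).1
        rwa [hγeq] at this
      have h3 : p * (1 - d) = p := by
        calc p * (1 - d) = (p * γ p) * (1 - d) := by rw [hγp.2.1]
          _ = p * (γ p * (1 - d)) := by rw [mul_assoc]
          _ = p := by rw [h2, hγp.2.1]
      apply hpd
      have h4 : p * d = p - p * (1 - d) := by rw [mul_sub, mul_one, sub_sub_cancel]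
      rw [h4, h3, sub_self]
    · have hqp := S.proj_le_mul' hq hp hqle
      have hdp : d * p = p * d := S.central_comm' hd.2 hp.1
      have hdq : d * q = q * d := S.central_comm' hd.2 hq.1
      refine S.proj_le' (S.isProj_mul_central' hq hd) (S.isProj_mul_central' hp hd) ?_ ?_
      · calc q * d * (p * d) = q * (d * (p * d)) := by rw [mul_assoc]
          _ = q * ((d * p) * d) := by rw [mul_assoc d p d]
          _ = q * ((p * d) * d) := by rw [hdp]
          _ = q * (p * (d * d)) := by rw [mul_assoc p d d]
          _ = (q * p) * (d * d) := by rw [← mul_assoc]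
          _ = q * d := by rw [hqp.1, hd.1.2]
      · calc p * d * (q * d) = p * (d * (q * d)) := by rw [mul_assoc]
          _ = p * ((d * q) * d) := by rw [mul_assoc d q d]
          _ = p * ((q * d) * d) := by rw [hdq]
          _ = p * (q * (d * d)) := by rw [mul_assoc q d d]
          _ = (p * q) * (d * d) := by rw [← mul_assoc]
          _ = q * d := by rw [hqp.2, hd.1.2]
  · intro H
    have hzorn : ∃ F, Maximal (· ∈ {F : Set R | F ⊆ Q ∧ (∀ x ∈ F, x ≤ p) ∧
        ∀ x ∈ F, ∀ y ∈ F, x ≠ y → γ x * γ y = 0}) F := by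
      apply zorn_subset
      intro c hc hchain
      refine ⟨⋃₀ c, ⟨?_, ?_, ?_⟩, fun s hs => Set.subset_sUnion_of_mem hs⟩
      · rintro x ⟨s, hs, hxs⟩; exact (hc hs).1 hxs
      · rintro x ⟨s, hs, hxs⟩; exact (hc hs).2.1 x hxs
      · rintro x ⟨s, hs, hxs⟩ y ⟨t, ht, hyt⟩ hxy
        rcases hchain.total hs ht with h | h
        · exact (hc ht).2.2 x (h hxs) y hyt hxy
        · exact (hc hs).2.2 x hxs y (h hyt) hxy
    obtain ⟨F, hFmax⟩ := hzorn
    obtain ⟨hFQ, hFp, hForth⟩ := hFmax.1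
    have hFproj : ∀ x ∈ F, S.IsProj x := fun x hx => hQproj x (hFQ hx)
    have hcent : S.CentOrthSet F := by
      refine ⟨hFproj, γ, fun x hx => ?_, hForth⟩
      have hx' := hFproj x hx
      have hγx := hγ x hx'
      refine ⟨hγx.1, S.proj_le' hx' hγx.1.1 hγx.2.1 ?_⟩
      rw [S.central_comm' hγx.1.2 hx'.1, hγx.2.1]
    obtain ⟨q, hqsup⟩ := hco F hcent
    have hq : S.IsProj q := hqsup.1
    have hqQ : q ∈ Q := hQsup F hFQ hcent q hqsup
    have hqlep : q ≤ p := hqsup.2.2 p hp hFp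
    have hγq := hγ q hq
    have hγqp : γ q ≤ γ p := by
      apply hγq.2.2 (γ p) hγp.1
      have h1 := (S.proj_le_mul' hq hp hqlep).1
      calc q * γ p = (q * p) * γ p := by rw [h1]
        _ = q * (p * γ p) := by rw [mul_assoc]
        _ = q := by rw [hγp.2.1, h1]
    have hecp : S.IsCentralProj (1 - γ q) := S.isCentralProj_one_sub' hγq.1
    have hdcp : S.IsCentralProj (γ p * (1 - γ q)) := S.isCentralProj_mul' hγp.1 hecp
    have hpd : p * (γ p * (1 - γ q)) = 0 := by
      by_contra hpd0
      obtain ⟨q', hq'Q, hq'0, hq'le⟩ := H (γ p * (1 - γ q)) hdcp hpd0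
      have hq' : S.IsProj q' := hQproj q' hq'Q
      have hγq' := hγ q' hq'
      have hpdproj : S.IsProj (p * (γ p * (1 - γ q))) := S.isProj_mul_central' hp hdcp
      have hq'd : q' * (γ p * (1 - γ q)) = q' := by
        have h1 := (S.proj_le_mul' hq' hpdproj hq'le).1
        calc q' * (γ p * (1 - γ q))
            = (q' * (p * (γ p * (1 - γ q)))) * (γ p * (1 - γ q)) := by rw [h1]
          _ = q' * (p * ((γ p * (1 - γ q)) * (γ p * (1 - γ q)))) := by rw [mul_assoc, mul_assoc]
          _ = q' * (p * (γ p * (1 - γ q))) := by rw [hdcp.1.2]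
          _ = q' := h1
      have hγq'd : γ q' ≤ γ p * (1 - γ q) := hγq'.2.2 _ hdcp hq'd
      have hde : (γ p * (1 - γ q)) * γ q = 0 := by
        rw [mul_assoc]
        have h0 : (1 - γ q) * γ q = 0 := by
          rw [sub_mul, one_mul, hγq.1.1.2, sub_self]
        rw [h0, mul_zero]
      have hγq'γq : γ q' * γ q = 0 := by
        have h1 := (S.proj_le_mul' hγq'.1.1 hdcp.1 hγq'd).1
        calc γ q' * γ q = (γ q' * (γ p * (1 - γ q))) * γ q := by rw [h1]
          _ = γ q' * ((γ p * (1 - γ q)) * γ q) := by rw [mul_assoc]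
          _ = 0 := by rw [hde, mul_zero]
      have hpdlep : p * (γ p * (1 - γ q)) ≤ p := by
        refine S.proj_le' hpdproj hp ?_ ?_
        · calc p * (γ p * (1 - γ q)) * p = p * ((γ p * (1 - γ q)) * p) := by rw [mul_assoc]
            _ = p * (p * (γ p * (1 - γ q))) := by rw [S.central_comm' hdcp.2 hp.1]
            _ = (p * p) * (γ p * (1 - γ q)) := by rw [← mul_assoc]
            _ = p * (γ p * (1 - γ q)) := by rw [hp.2]
        · calc p * (p * (γ p * (1 - γ q))) = (p * p) * (γ p * (1 - γ q)) := by rw [← mul_assoc]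
            _ = p * (γ p * (1 - γ q)) := by rw [hp.2]
      have hq'p : q' ≤ p := le_trans hq'le hpdlep
      have horthF : ∀ x ∈ F, γ q' * γ x = 0 ∧ γ x * γ q' = 0 := by
        intro x hx
        have hx' := hFproj x hx
        have hγx := hγ x hx'
        have hxq : x ≤ q := hqsup.2.1 x hx
        have hγxq : γ x ≤ γ q := by
          apply hγx.2.2 (γ q) hγq.1
          have h1 := (S.proj_le_mul' hx' hq hxq).1
          calc x * γ q = (x * q) * γ q := by rw [h1]
            _ = x * (q * γ q) := by rw [mul_assoc]
            _ = x := by rw [hγq.2.1, h1]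
        have h2 := (S.proj_le_mul' hγx.1.1 hγq.1.1 hγxq).2
        have hleft : γ q' * γ x = 0 := by
          calc γ q' * γ x = γ q' * (γ q * γ x) := by rw [h2]
            _ = (γ q' * γ q) * γ x := by rw [← mul_assoc]
            _ = 0 := by rw [hγq'γq, zero_mul]
        exact ⟨hleft, by rw [← S.central_comm' hγq'.1.2 hγx.1.1.1, hleft]⟩
      have hq'γ0 : γ q' ≠ 0 := by
        intro h0
        apply hq'0
        have hq'γ := hγq'.2.1
        rw [h0, mul_zero] at hq'γ
        exact hq'γ.symm
      have hq'F : q' ∉ F := by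
        intro hmem
        have h := (horthF q' hmem).1
        rw [hγq'.1.1.2] at h
        exact hq'γ0 h
      apply hq'F
      have hins : insert q' F ∈ {F : Set R | F ⊆ Q ∧ (∀ x ∈ F, x ≤ p) ∧
          ∀ x ∈ F, ∀ y ∈ F, x ≠ y → γ x * γ y = 0} := by
        refine ⟨Set.insert_subset_iff.2 ⟨hq'Q, hFQ⟩, ?_, ?_⟩
        · rintro x (rfl | hx)
          · exact hq'p
          · exact hFp x hx
        · rintro x (rfl | hx) y (rfl | hy) hxy
          · exact absurd rfl hxy
          · exact (horthF y hy).1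
          · exact (horthF x hx).2
          · exact hForth x hx y hy hxy
      exact hFmax.2 hins (Set.subset_insert q' F) (Set.mem_insert q' F)
    have hpγq : p * γ q = p := by
      have h1 : p * (γ p * (1 - γ q)) = p - p * γ q := by
        rw [← mul_assoc, hγp.2.1, mul_sub, mul_one]
      rw [hpd] at h1
      have := sub_eq_zero.1 h1.symm
      exact this.symm
    have hγpq : γ p ≤ γ q := hγp.2.2 (γ q) hγq.1 hpγq
    have hγeq : γ q = γ p := le_antisymm hγqp hγpq
    have hq0 : q ≠ 0 := by
      intro h0
      have hγ0 := hγ 0 S.isProj_zero'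
      have hle0 : γ (0 : R) ≤ 0 :=
        hγ0.2.2 0 ⟨S.isProj_zero', S.zero_mem', fun a _ => by rw [zero_mul, mul_zero]⟩
          (by rw [mul_zero])
      have hγ00 : γ (0 : R) = 0 := S.proj_eq_zero' hγ0.1.1 hle0
      apply hp0
      have hpp := hγp.2.1
      rw [← hγeq, h0, hγ00, mul_zero] at hpp
      exact hpp.symm
    exact ⟨q, hqQ, hq0, hqlep, hγeq⟩
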